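/- arXiv:2501.10028 — 7 statements merged into one kernel-verified Lean document; each statement's English description precedes it below -/
import Mathlib

section
/- For all integers d ≥ 0, ℓ ≥ 0 and all z ∈ ℂ, the series Σ_{i=2d+1}^∞ ((−1)^d d! (d+ℓ)! / ((2d+ℓ)! (ℓ+i)!)) · C(i−(d+1), d) · z^i converges and φ_ℓ(z) · D̂_{d,ℓ}(z) − N̂_{d,ℓ}(z) = Σ_{i=2d+1}^∞ ((−1)^d d! (d+ℓ)! / ((2d+ℓ)! (ℓ+i)!)) · C(i−(d+1), d) · z^i. -/
open Finset

/-- For an integer `ℓ ≥ 0` and `z ∈ ℂ`, `φ_ℓ(z) := Σ_{k=0}^∞ z^k/(ℓ+k)!`. -/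
noncomputable def phiC (ℓ : ℕ) (z : ℂ) : ℂ := ∑' k : ℕ, z ^ k / ((ℓ + k).factorial : ℂ)

/-- The Padé numerator
`N̂_{d,ℓ}(z) := (d!/(2d+ℓ)!) Σ_{i=0}^{d} [Σ_{j=0}^{i} ((2d+ℓ−j)! (−1)^j)/(j!(d−j)!(ℓ+i−j)!)] z^i`. -/
noncomputable def Nhat (d ℓ : ℕ) (z : ℂ) : ℂ :=
  ((d.factorial : ℂ) / ((2 * d + ℓ).factorial : ℂ)) *
    ∑ i ∈ Finset.range (d + 1),
      (∑ j ∈ Finset.range (i + 1),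
        (((2 * d + ℓ - j).factorial : ℂ) * (-1 : ℂ) ^ j) /
          ((j.factorial : ℂ) * ((d - j).factorial : ℂ) * ((ℓ + i - j).factorial : ℂ))) * z ^ i

/-- The Padé denominator
`D̂_{d,ℓ}(z) := (d!/(2d+ℓ)!) Σ_{i=0}^{d} ((2d+ℓ−i)!/(i!(d−i)!)) (−z)^i`. -/
noncomputable def Dhat (d ℓ : ℕ) (z : ℂ) : ℂ :=
  ((d.factorial : ℂ) / ((2 * d + ℓ).factorial : ℂ)) *
    ∑ i ∈ Finset.range (d + 1),
      (((2 * d + ℓ - i).factorial : ℂ) / ((i.factorial : ℂ) * ((d - i).factorial : ℂ))) * (-z) ^ i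

/- ### Auxiliary lemmas -/

lemma factC_ne (n : ℕ) : ((n.factorial : ℕ) : ℂ) ≠ 0 :=
  Nat.cast_ne_zero.mpr (Nat.factorial_ne_zero n)

lemma altLemma (e : ℕ) (h : ℕ → ℂ) :
    ∑ j ∈ range (e + 2), (-1 : ℂ) ^ j * ((e + 1).choose j : ℂ) * h j
      = ∑ j ∈ range (e + 1), (-1 : ℂ) ^ j * (e.choose j : ℂ) * (h j - h (j + 1)) := by
  have hchoose : ∀ j : ℕ, (((e+1).choose (j+1) : ℕ) : ℂ) = (e.choose j : ℂ) + (e.choose (j+1) : ℂ) := by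
    intro j; rw [Nat.choose_succ_succ]; push_cast; ring
  rw [Finset.sum_range_succ' (fun j => (-1:ℂ)^j * ((e + 1).choose j : ℂ) * h j) (e+1)]
  simp only [hchoose, pow_succ, Nat.choose_zero_right, Nat.cast_one, pow_zero, one_mul, mul_one]
  have hS1 : ∑ j ∈ range (e + 1), (-1 : ℂ) ^ j * (e.choose j : ℂ) * h j
      = (∑ j ∈ range e, (-1:ℂ)^j * (-1) * (e.choose (j+1) : ℂ) * h (j+1)) + h 0 := by
    rw [Finset.sum_range_succ' (fun j => (-1:ℂ)^j * (e.choose j : ℂ) * h j) e]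
    simp only [pow_succ, Nat.choose_zero_right, Nat.cast_one, pow_zero, one_mul, mul_one]
  have hS2 : ∑ j ∈ range (e + 1), (-1:ℂ)^j * (-1) * (e.choose (j+1) : ℂ) * h (j+1)
      = ∑ j ∈ range e, (-1:ℂ)^j * (-1) * (e.choose (j+1) : ℂ) * h (j+1) := by
    rw [Finset.sum_range_succ]
    simp [Nat.choose_succ_self]
  simp only [mul_sub, Finset.sum_sub_distrib, hS1]
  rw [← hS2]
  rw [add_sub_right_comm, ← Finset.sum_sub_distrib]
  refine congrArg (· + h 0) ?_
  apply Finset.sum_congr rfl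
  intro x _
  ring

lemma lemA (d : ℕ) : ∀ ℓ m : ℕ,
    ∑ j ∈ range (d + 1), (-1 : ℂ) ^ j * (d.choose j : ℂ) *
        (((d + ℓ + j).factorial : ℂ) / ((ℓ + m + 1 + j).factorial : ℂ))
      = (d.factorial : ℂ) * (m.choose d : ℂ) * ((d + ℓ).factorial : ℂ) /
          ((d + ℓ + m + 1).factorial : ℂ) := by
  induction d with
  | zero => intro ℓ m; simp
  | succ e ih =>
    intro ℓ m
    rw [show e + 1 + 1 = e + 2 from rfl,
      altLemma e (fun j => ((e + 1 + ℓ + j).factorial : ℂ) / ((ℓ + m + 1 + j).factorial : ℂ))]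
    have hdiff : ∀ j : ℕ,
        (((e + 1 + ℓ + j).factorial : ℂ) / ((ℓ + m + 1 + j).factorial : ℂ)
          - ((e + 1 + ℓ + (j+1)).factorial : ℂ) / ((ℓ + m + 1 + (j+1)).factorial : ℂ))
        = ((m : ℂ) - e) * (((e + (ℓ+1) + j).factorial : ℂ) / (((ℓ+1) + m + 1 + j).factorial : ℂ)) := by
      intro j
      have e1 : e + 1 + ℓ + (j+1) = (e + 1 + ℓ + j) + 1 := by ring
      have e2 : ℓ + m + 1 + (j+1) = (ℓ + m + 1 + j) + 1 := by ring
      have e3 : e + (ℓ+1) + j = e + 1 + ℓ + j := by ring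
      have e4 : (ℓ+1) + m + 1 + j = (ℓ + m + 1 + j) + 1 := by ring
      have hA : ((e+1+ℓ+(j+1)).factorial : ℂ) = ((e:ℂ)+1+ℓ+j + 1) * ((e+1+ℓ+j).factorial : ℂ) := by
        rw [e1, Nat.factorial_succ]; push_cast; ring
      have hBf : ((ℓ+m+1+(j+1)).factorial : ℂ) = ((ℓ:ℂ)+m+1+j + 1) * ((ℓ+m+1+j).factorial : ℂ) := by
        rw [e2, Nat.factorial_succ]; push_cast; ring
      have hN : ((e+(ℓ+1)+j).factorial : ℂ) = ((e+1+ℓ+j).factorial : ℂ) := by rw [e3]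
      have hD : (((ℓ+1)+m+1+j).factorial : ℂ) = ((ℓ:ℂ)+m+1+j + 1) * ((ℓ+m+1+j).factorial : ℂ) := by
        rw [e4, Nat.factorial_succ]; push_cast; ring
      rw [hA, hBf, hN, hD]
      have b0 : ((ℓ+m+1+j).factorial : ℂ) ≠ 0 := factC_ne _
      have b1 : ((ℓ:ℂ)+m+1+j + 1) ≠ 0 := by exact_mod_cast Nat.succ_ne_zero (ℓ+m+1+j)
      field_simp
      ring
    simp only [hdiff]
    have hcong : ∀ j ∈ range (e+1), (-1:ℂ)^j * (e.choose j : ℂ) *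
        (((m : ℂ) - e) * (((e + (ℓ+1) + j).factorial : ℂ) / (((ℓ+1) + m + 1 + j).factorial : ℂ)))
        = ((m : ℂ) - e) * ((-1:ℂ)^j * (e.choose j : ℂ) *
          (((e + (ℓ+1) + j).factorial : ℂ) / (((ℓ+1) + m + 1 + j).factorial : ℂ))) := by
      intro j _; ring
    rw [Finset.sum_congr rfl hcong, ← Finset.mul_sum, ih (ℓ+1) m]
    have ha : e + (ℓ+1) = e + 1 + ℓ := by ring
    rw [ha]
    have key : ((m : ℂ) - e) * (e.factorial : ℂ) * (m.choose e : ℂ)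
        = ((e+1).factorial : ℂ) * (m.choose (e+1) : ℂ) := by
      rcases lt_or_ge m e with hlt | hle
      · rw [Nat.choose_eq_zero_of_lt hlt, Nat.choose_eq_zero_of_lt (by omega)]
        simp
      · have h1 := congrArg (fun n : ℕ => (n : ℂ)) (Nat.choose_succ_right_eq m e)
        push_cast [Nat.cast_sub hle] at h1
        rw [Nat.factorial_succ]
        push_cast
        linear_combination (-(e.factorial : ℂ)) * h1
    linear_combination (((e+1+ℓ).factorial : ℂ) / ((e+1+ℓ+m+1).factorial : ℂ)) * key

/- ### Analytic setup -/

lemma phiC_hasSum (ℓ : ℕ) (z : ℂ) :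
    HasSum (fun k : ℕ => z ^ k / ((ℓ + k).factorial : ℂ)) (phiC ℓ z) := by
  have hs : Summable (fun k : ℕ => z ^ k / ((ℓ + k).factorial : ℂ)) := by
    apply Summable.of_norm_bounded (Real.summable_pow_div_factorial ‖z‖)
    intro k
    simp only [norm_div, norm_pow, Complex.norm_natCast]
    gcongr
    exact Nat.le_add_left k ℓ
  exact hs.hasSum

noncomputable def cD (d ℓ : ℕ) (j : ℕ) : ℂ :=
  ((d.factorial : ℂ) / ((2*d+ℓ).factorial : ℂ)) *
    (((2*d+ℓ-j).factorial : ℂ) / ((j.factorial : ℂ) * ((d-j).factorial : ℂ))) * (-1:ℂ)^j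

noncomputable def FF (d ℓ : ℕ) (z : ℂ) (j i : ℕ) : ℂ :=
  if j ≤ i then cD d ℓ j * z ^ i / ((ℓ + (i - j)).factorial : ℂ) else 0

noncomputable def NF (d ℓ : ℕ) (z : ℂ) (i : ℕ) : ℂ :=
  if i < d + 1 then
    ((d.factorial : ℂ) / ((2*d+ℓ).factorial : ℂ)) *
      (∑ j ∈ range (i+1), (((2*d+ℓ-j).factorial : ℂ) * (-1:ℂ)^j) /
        ((j.factorial : ℂ) * ((d-j).factorial : ℂ) * ((ℓ+i-j).factorial : ℂ))) * z ^ i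
  else 0

noncomputable def GG (d ℓ : ℕ) (z : ℂ) (i : ℕ) : ℂ :=
  (∑ j ∈ range (d+1), FF d ℓ z j i) - NF d ℓ z i

lemma FF_hasSum (d ℓ : ℕ) (z : ℂ) (j : ℕ) :
    HasSum (FF d ℓ z j) (cD d ℓ j * z ^ j * phiC ℓ z) := by
  have h0 : ∀ x ∉ Set.range (fun k : ℕ => k + j), FF d ℓ z j x = 0 := by
    intro x hx
    rw [FF, if_neg]
    intro hle
    exact hx ⟨x - j, show x - j + j = x by omega⟩
  have hcomp : (FF d ℓ z j ∘ fun k : ℕ => k + j)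
      = fun k => (cD d ℓ j * z ^ j) * (z ^ k / ((ℓ + k).factorial : ℂ)) := by
    funext k
    simp only [Function.comp, FF, if_pos (Nat.le_add_left j k)]
    rw [Nat.add_sub_cancel, pow_add]
    ring
  have h1 := (phiC_hasSum ℓ z).mul_left (cD d ℓ j * z ^ j)
  rw [← hcomp] at h1
  exact ((add_left_injective j).hasSum_iff h0).mp h1

lemma Dhat_eq (d ℓ : ℕ) (z : ℂ) :
    Dhat d ℓ z = ∑ j ∈ range (d+1), cD d ℓ j * z ^ j := by
  rw [Dhat, Finset.mul_sum]
  refine Finset.sum_congr rfl fun j _ => ?_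
  rw [cD, neg_pow]
  ring

lemma sumFF_hasSum (d ℓ : ℕ) (z : ℂ) :
    HasSum (fun i => ∑ j ∈ range (d+1), FF d ℓ z j i) (Dhat d ℓ z * phiC ℓ z) := by
  have h := hasSum_sum (s := range (d+1)) (f := fun j => FF d ℓ z j)
    (a := fun j => cD d ℓ j * z ^ j * phiC ℓ z) (fun j _ => FF_hasSum d ℓ z j)
  rwa [← Finset.sum_mul, ← Dhat_eq] at h

lemma NF_hasSum (d ℓ : ℕ) (z : ℂ) : HasSum (NF d ℓ z) (Nhat d ℓ z) := by
  have h0 : ∀ i ∉ range (d+1), NF d ℓ z i = 0 := by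
    intro i hi
    rw [NF, if_neg (by simpa using hi)]
  have h : HasSum (NF d ℓ z) (∑ i ∈ range (d+1), NF d ℓ z i) := hasSum_sum_of_ne_finset_zero h0
  have heq : ∑ i ∈ range (d+1), NF d ℓ z i = Nhat d ℓ z := by
    rw [Nhat, Finset.mul_sum]
    refine Finset.sum_congr rfl fun i hi => ?_
    rw [NF, if_pos (Finset.mem_range.mp hi)]
    ring
  rwa [heq] at h

lemma GG_hasSum (d ℓ : ℕ) (z : ℂ) :
    HasSum (GG d ℓ z) (phiC ℓ z * Dhat d ℓ z - Nhat d ℓ z) := by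
  have h := (sumFF_hasSum d ℓ z).sub (NF_hasSum d ℓ z)
  rwa [mul_comm (Dhat d ℓ z)] at h

lemma GG_eq_zero_low (d ℓ : ℕ) (z : ℂ) (i : ℕ) (hi : i ≤ d) : GG d ℓ z i = 0 := by
  rw [GG, NF, if_pos (by omega)]
  rw [sub_eq_zero]
  rw [← Finset.sum_subset (Finset.range_subset_range.mpr (by omega : i + 1 ≤ d + 1))
    (fun x _ hnx => by rw [FF, if_neg (by simp at hnx; omega)])]
  rw [Finset.mul_sum, Finset.sum_mul]
  refine Finset.sum_congr rfl fun j hj => ?_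
  have hji : j ≤ i := by simpa [Nat.lt_succ_iff] using Finset.mem_range.mp hj
  rw [FF, if_pos (by omega), cD]
  rw [show ℓ + (i - j) = ℓ + i - j from by omega]
  ring

lemma GG_val (d ℓ : ℕ) (z : ℂ) (m : ℕ) :
    GG d ℓ z (m + (d+1)) = (-1:ℂ)^d * (d.factorial:ℂ) * ((d+ℓ).factorial:ℂ) /
      (((2*d+ℓ).factorial:ℂ) * ((d+ℓ+m+1).factorial:ℂ)) * ((m.choose d : ℕ):ℂ)
        * z^(m+(d+1)) := by
  rw [GG, NF, if_neg (by omega), sub_zero]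
  rw [← Finset.sum_range_reflect (fun j => FF d ℓ z j (m + (d+1))) (d+1)]
  have hterm : ∀ j ∈ range (d+1),
      FF d ℓ z (d + 1 - 1 - j) (m + (d+1))
        = ((-1:ℂ)^d * z^(m+(d+1)) / ((2*d+ℓ).factorial : ℂ)) *
          ((-1:ℂ)^j * (d.choose j : ℂ) *
            (((d+ℓ+j).factorial : ℂ) / ((ℓ+m+1+j).factorial : ℂ))) := by
    intro j hj
    have hjd : j ≤ d := by simpa [Nat.lt_succ_iff] using Finset.mem_range.mp hj
    rw [show d + 1 - 1 - j = d - j from by omega]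
    rw [FF, if_pos (by omega : d - j ≤ m + (d+1)), cD]
    rw [show 2*d+ℓ-(d-j) = d+ℓ+j from by omega,
        show d-(d-j) = j from by omega,
        show ℓ + (m + (d+1) - (d-j)) = ℓ+m+1+j from by omega]
    have h2 : ((-1:ℂ)^j) * ((-1:ℂ)^j) = 1 := by
      rw [← pow_add]; exact Even.neg_one_pow ⟨j, rfl⟩
    have h1 : (-1:ℂ)^(d-j) * (-1:ℂ)^j = (-1:ℂ)^d := by
      rw [← pow_add]; congr 1; omega
    have hpow : (-1:ℂ)^(d-j) = (-1:ℂ)^d * (-1:ℂ)^j := by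
      calc (-1:ℂ)^(d-j) = (-1:ℂ)^(d-j) * (((-1:ℂ)^j) * ((-1:ℂ)^j)) := by rw [h2, mul_one]
        _ = ((-1:ℂ)^(d-j) * (-1:ℂ)^j) * (-1:ℂ)^j := by ring
        _ = (-1:ℂ)^d * (-1:ℂ)^j := by rw [h1]
    have hch : ((d.choose j : ℕ) : ℂ) * ((d-j).factorial : ℂ) * (j.factorial : ℂ)
        = (d.factorial : ℂ) := by
      exact_mod_cast congrArg (Nat.cast : ℕ → ℂ)
        (by rw [mul_right_comm]; exact Nat.choose_mul_factorial_mul_factorial hjd)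
    rw [hpow, ← hch]
    have b1 : ((d-j).factorial : ℂ) ≠ 0 := factC_ne _
    have b2 : (j.factorial : ℂ) ≠ 0 := factC_ne _
    have b3 : (((2*d+ℓ).factorial : ℕ) : ℂ) ≠ 0 := factC_ne _
    have b4 : (((ℓ+m+1+j).factorial : ℕ) : ℂ) ≠ 0 := factC_ne _
    field_simp
  rw [Finset.sum_congr rfl hterm, ← Finset.mul_sum, lemA d ℓ m]
  have b3 : (((2*d+ℓ).factorial : ℕ) : ℂ) ≠ 0 := factC_ne _
  have b5 : (((d+ℓ+m+1).factorial : ℕ) : ℂ) ≠ 0 := factC_ne _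
  field_simp

/-- For all integers `d ≥ 0`, `ℓ ≥ 0` and `z ∈ ℂ`, the series
`Σ_{i=2d+1}^∞ ((−1)^d d! (d+ℓ)!/((2d+ℓ)!(ℓ+i)!)) C(i−(d+1), d) z^i`
converges to `φ_ℓ(z)·D̂_{d,ℓ}(z) − N̂_{d,ℓ}(z)` (the series is indexed by `i = n + (2d+1)`,
`n ∈ ℕ`). -/
theorem stmt4 (d ℓ : ℕ) (z : ℂ) :
    HasSum
      (fun n : ℕ =>
        ((-1 : ℂ) ^ d * (d.factorial : ℂ) * ((d + ℓ).factorial : ℂ) /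
            (((2 * d + ℓ).factorial : ℂ) * ((ℓ + (n + (2 * d + 1))).factorial : ℂ))) *
          (((n + (2 * d + 1) - (d + 1)).choose d : ℕ) : ℂ) * z ^ (n + (2 * d + 1)))
      (phiC ℓ z * Dhat d ℓ z - Nhat d ℓ z) := by
  have hG := GG_hasSum d ℓ z
  have hinj : Function.Injective (fun n : ℕ => n + (2*d+1)) := add_left_injective _
  have h0 : ∀ x ∉ Set.range (fun n : ℕ => n + (2*d+1)), GG d ℓ z x = 0 := by
    intro x hx
    have hxlt : x < 2*d+1 := by
      by_contra hge
      push_neg at hge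
      exact hx ⟨x - (2*d+1), show x - (2*d+1) + (2*d+1) = x by omega⟩
    rcases le_or_gt x d with h | h
    · exact GG_eq_zero_low d ℓ z x h
    · have hm : x = (x - (d+1)) + (d+1) := by omega
      rw [hm, GG_val, Nat.choose_eq_zero_of_lt (by omega : x - (d+1) < d)]
      simp
  have hcomp : (fun n : ℕ =>
        ((-1 : ℂ) ^ d * (d.factorial : ℂ) * ((d + ℓ).factorial : ℂ) /
            (((2 * d + ℓ).factorial : ℂ) * ((ℓ + (n + (2 * d + 1))).factorial : ℂ))) *
          (((n + (2 * d + 1) - (d + 1)).choose d : ℕ) : ℂ) * z ^ (n + (2 * d + 1)))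
      = (GG d ℓ z ∘ fun n : ℕ => n + (2*d+1)) := by
    funext n
    simp only [Function.comp]
    rw [show n + (2*d+1) = (n+d) + (d+1) from by omega]
    rw [GG_val d ℓ z (n+d)]
    rw [show ℓ + (n + d + (d+1)) = d+ℓ+(n+d)+1 from by omega,
        show n + d + (d+1) - (d+1) = n + d from by omega]
  rw [hcomp]
  exact (hinj.hasSum_iff h0).mpr hG
end

section
/- Let d ≥ 0 be an integer and let 0 ≤ R < 2π. Then the series Σ_{i=2d+1}^∞ γ_i R^i converges, where γ_i := |Σ_{m=0}^{i−2d−1} (B_m/m!) · ((d+1)!/(1+i−m)!) · C(i−m−(d+1), d)|. -/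
open Finset

open Real

lemma mychoose_le_two_pow (n k : ℕ) : n.choose k ≤ 2 ^ n := by
  rcases le_or_gt k n with h | h
  · calc n.choose k ≤ ∑ m ∈ range (n+1), n.choose m :=
        Finset.single_le_sum (fun i _ => Nat.zero_le _) (by simp [Nat.lt_succ_iff, h])
      _ = 2 ^ n := Nat.sum_range_choose n
  · simp [Nat.choose_eq_zero_of_lt h]

lemma bern_abs (m : ℕ) : |(bernoulli m : ℝ)| / m.factorial ≤ 4 / (2 * Real.pi) ^ m := by
  have hpi := Real.pi_gt_three
  match m with
  | 0 => norm_num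
  | 1 =>
      simp only [bernoulli_one, Nat.factorial_one, pow_one]
      push_cast
      rw [abs_of_nonpos (by norm_num), div_le_div_iff₀ (by norm_num) (by positivity)]
      nlinarith [Real.pi_le_four]
  | (m+2) =>
      rcases Nat.even_or_odd (m+2) with he | ho
      · obtain ⟨k, hk⟩ := he
        have hk' : m + 2 = 2 * k := by omega
        have hk0 : k ≠ 0 := by omega
        have h2 := hasSum_zeta_nat hk0
        have h1 := hasSum_zeta_nat one_ne_zero
        have hval1 : ((-1 : ℝ)) ^ (1 + 1) * (2 : ℝ) ^ (2 * 1 - 1) * π ^ (2 * 1) *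
            (bernoulli (2 * 1) : ℝ) / (2 * 1).factorial = π ^ 2 / 6 := by
          have : bernoulli 2 = 1 / 6 := by
            rw [bernoulli_eq_bernoulli'_of_ne_one (by norm_num), bernoulli'_two]
          norm_num [this]
          ring
        rw [hval1] at h1
        set S : ℝ := ((-1 : ℝ)) ^ (k + 1) * (2 : ℝ) ^ (2 * k - 1) * π ^ (2 * k) *
            (bernoulli (2 * k) : ℝ) / (2 * k).factorial with hS
        have hSnonneg : 0 ≤ S := hasSum_le (fun n => by positivity) hasSum_zero h2
        have hSle : S ≤ 2 := by
          have hle : S ≤ π ^ 2 / 6 := by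
            refine hasSum_le (fun n => ?_) h2 h1
            rcases Nat.eq_zero_or_pos n with rfl | hn
            · simp [hk0, pow_eq_zero_iff]
            · have h1n : (1:ℝ) ≤ (n:ℝ) := by exact_mod_cast hn
              gcongr
              · omega
          nlinarith [Real.pi_lt_d2]
        -- |bernoulli (2k)| = S * (2k)! / (2^(2k-1) π^(2k))
        have hc : (0:ℝ) < (2:ℝ) ^ (2 * k - 1) * π ^ (2 * k) / (2 * k).factorial := by
          positivity
        have habs : S = (2:ℝ) ^ (2 * k - 1) * π ^ (2 * k) / (2 * k).factorial *
            |(bernoulli (2 * k) : ℝ)| := by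
          have := abs_of_nonneg hSnonneg
          rw [← this, hS]
          rw [abs_div, abs_mul, abs_mul, abs_mul]
          rw [abs_pow, abs_neg, abs_one, one_pow, one_mul]
          rw [abs_of_nonneg (by positivity : (0:ℝ) ≤ (2:ℝ) ^ (2*k-1)),
            abs_of_nonneg (by positivity : (0:ℝ) ≤ π ^ (2*k)),
            abs_of_nonneg (by positivity : (0:ℝ) ≤ ((2*k).factorial : ℝ))]
          ring
        have hB : |(bernoulli (2 * k) : ℝ)| / (2 * k).factorial
            = S / ((2:ℝ) ^ (2 * k - 1) * π ^ (2 * k)) := by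
          rw [habs]
          have h2k : (0:ℝ) < ((2*k).factorial : ℝ) := by positivity
          field_simp
        rw [hk', hB]
        have hpow : (2 * π) ^ (2 * k) = 2 * ((2:ℝ) ^ (2 * k - 1) * π ^ (2 * k)) := by
          rw [mul_pow]
          have : (2:ℝ) ^ (2 * k) = 2 * (2:ℝ) ^ (2 * k - 1) := by
            rw [← pow_succ']
            congr 1
            omega
          rw [this]; ring
        rw [hpow, div_le_div_iff₀ (by positivity) (by positivity)]
        nlinarith [pow_pos (by positivity : (0:ℝ) < (2:ℝ)^(2*k-1) * π ^ (2*k)) 1,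
          mul_le_mul_of_nonneg_right hSle
            (le_of_lt (by positivity : (0:ℝ) < (2:ℝ)^(2*k-1) * π ^ (2*k)))]
      · have hz : bernoulli (m + 2) = 0 := by
          rw [bernoulli_eq_bernoulli'_of_ne_one (by omega)]
          exact bernoulli'_eq_zero_of_odd ho (by omega)
        rw [hz]
        push_cast
        simp only [abs_zero, zero_div]
        positivity

lemma pow_div_fact_le_exp {x : ℝ} (hx : 0 ≤ x) (j : ℕ) :
    x ^ j / j.factorial ≤ Real.exp x := by
  calc x ^ j / j.factorial ≤ ∑ i ∈ range (j + 1), x ^ i / i.factorial :=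
        Finset.single_le_sum (f := fun i => x ^ i / (i.factorial : ℝ)) (fun i _ => div_nonneg (pow_nonneg hx i) (by positivity))
          (Finset.self_mem_range_succ j)
    _ ≤ Real.exp x := Real.sum_le_exp_of_nonneg hx _


/-- For integers `d ≥ 0` and `i ≥ 2d+1`,
`γ_i := |Σ_{m=0}^{i−2d−1} (B_m/m!)·((d+1)!/(1+i−m)!)·C(i−m−(d+1), d)|`,
where `B_m` is the `m`-th Bernoulli number (convention `B_1 = −1/2`). -/
noncomputable def gammaCoeff (d i : ℕ) : ℝ :=
  |∑ m ∈ Finset.range (i - 2 * d),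
      ((bernoulli m : ℝ) / (m.factorial : ℝ)) *
        (((d + 1).factorial : ℝ) / ((1 + i - m).factorial : ℝ)) *
        (((i - m - (d + 1)).choose d : ℕ) : ℝ)|

/-- Let `d ≥ 0` and `0 ≤ R < 2π`. Then the series `Σ_{i=2d+1}^∞ γ_i R^i` converges
(the series is indexed by `i = n + (2d+1)`, `n ∈ ℕ`). -/
theorem stmt8 (d : ℕ) (R : ℝ) (hR0 : 0 ≤ R) (hR : R < 2 * Real.pi) :
    Summable (fun n : ℕ => gammaCoeff d (n + (2 * d + 1)) * R ^ (n + (2 * d + 1))) := by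
  have hπ : 0 < π := Real.pi_pos
  set q : ℝ := R / (2 * π) with hq
  have hq0 : 0 ≤ q := by positivity
  have hq1 : q < 1 := (div_lt_one (by positivity)).2 hR
  set K : ℝ := 4 * (4 * π) ^ d * Real.exp (4 * π) with hK
  have hK0 : 0 ≤ K := by positivity
  have hsum : Summable (fun n : ℕ => K * (((n : ℝ) + 1) * q ^ n)) := by
    apply Summable.mul_left
    have h1 : Summable (fun n : ℕ => (n : ℝ) ^ 1 * q ^ n) :=
      summable_pow_mul_geometric_of_norm_lt_one 1 (by rwa [Real.norm_of_nonneg hq0])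
    have h2 : Summable (fun n : ℕ => q ^ n) := summable_geometric_of_lt_one hq0 hq1
    exact (h1.add h2).congr (fun n => by push_cast; ring)
  refine Summable.of_nonneg_of_le (fun n => ?_) (fun n => ?_) hsum
  · have : 0 ≤ gammaCoeff d (n + (2 * d + 1)) := abs_nonneg _
    positivity
  · set i := n + (2 * d + 1) with hi
    have hrange : i - 2 * d = n + 1 := by omega
    have hterm : ∀ m ∈ range (n + 1),
        |((bernoulli m : ℝ) / (m.factorial : ℝ)) *
          (((d + 1).factorial : ℝ) / ((1 + i - m).factorial : ℝ)) *
          (((i - m - (d + 1)).choose d : ℕ) : ℝ)| * R ^ i ≤ K * q ^ i := by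
      intro m hm
      have hmn : m ≤ n := by simpa [Nat.lt_succ_iff] using hm
      set k := i - m with hk
      have hmk : m + k = i := by omega
      have hkd : 2 * d + 1 ≤ k := by omega
      have e1 : 1 + i - m = k + 1 := by omega
      have e2 : i - m - (d + 1) = k - (d + 1) := by omega
      rw [e1, e2]
      have b1 : |(bernoulli m : ℝ)| / (m.factorial : ℝ) ≤ 4 / (2 * π) ^ m := bern_abs m
      have b23 : (((d + 1).factorial : ℝ) / ((k + 1).factorial : ℝ)) *
          (((k - (d + 1)).choose d : ℕ) : ℝ) ≤ (2 : ℝ) ^ k / ((k - d).factorial : ℝ) := by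
        have hnat : (d + 1).factorial * ((k - (d + 1)).choose d) * (k - d).factorial
            ≤ 2 ^ k * (k + 1).factorial := by
          have hdvd : (d + 1).factorial * (k - d).factorial ≤ (k + 1).factorial := by
            refine Nat.le_of_dvd (Nat.factorial_pos _) ?_
            have := Nat.factorial_mul_factorial_dvd_factorial_add (d + 1) (k - d)
            rwa [show d + 1 + (k - d) = k + 1 by omega] at this
          have hch : (k - (d + 1)).choose d ≤ 2 ^ k :=
            le_trans (mychoose_le_two_pow _ d) (Nat.pow_le_pow_right (by norm_num) (by omega))
          calc (d + 1).factorial * ((k - (d + 1)).choose d) * (k - d).factorial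
              ≤ (d + 1).factorial * 2 ^ k * (k - d).factorial := by
                exact Nat.mul_le_mul_right _ (Nat.mul_le_mul_left _ hch)
            _ = 2 ^ k * ((d + 1).factorial * (k - d).factorial) := by ring
            _ ≤ 2 ^ k * (k + 1).factorial := Nat.mul_le_mul_left _ hdvd
        rw [div_mul_eq_mul_div, div_le_div_iff₀ (by positivity) (by positivity)]
        exact_mod_cast hnat
      have habs : |((bernoulli m : ℝ) / (m.factorial : ℝ)) *
          (((d + 1).factorial : ℝ) / ((k + 1).factorial : ℝ)) *
          (((k - (d + 1)).choose d : ℕ) : ℝ)|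
          = (|(bernoulli m : ℝ)| / (m.factorial : ℝ)) *
            ((((d + 1).factorial : ℝ) / ((k + 1).factorial : ℝ)) *
            (((k - (d + 1)).choose d : ℕ) : ℝ)) := by
        rw [abs_mul, abs_mul, abs_div, abs_div]
        rw [abs_of_nonneg (by positivity : (0:ℝ) ≤ ((d+1).factorial : ℝ)),
          abs_of_nonneg (by positivity : (0:ℝ) ≤ (m.factorial : ℝ)),
          abs_of_nonneg (by positivity : (0:ℝ) ≤ ((k+1).factorial : ℝ)),
          abs_of_nonneg (by positivity : (0:ℝ) ≤ (((k - (d+1)).choose d : ℕ) : ℝ))]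
        ring
      have hA : (2 : ℝ) ^ k / ((k - d).factorial : ℝ)
          ≤ (4 * π) ^ d * Real.exp (4 * π) / (2 * π) ^ k := by
        rw [div_le_div_iff₀ (by positivity) (by positivity)]
        have hexp : (4 * π) ^ (k - d) ≤ Real.exp (4 * π) * ((k - d).factorial : ℝ) := by
          have := pow_div_fact_le_exp (by positivity : (0:ℝ) ≤ 4 * π) (k - d)
          rw [div_le_iff₀ (by positivity)] at this
          linarith
        calc (2 : ℝ) ^ k * (2 * π) ^ k = (4 * π) ^ k := by
              rw [← mul_pow]; ring_nf
          _ = (4 * π) ^ d * (4 * π) ^ (k - d) := by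
              rw [← pow_add]; congr 1; omega
          _ ≤ (4 * π) ^ d * (Real.exp (4 * π) * ((k - d).factorial : ℝ)) := by
              gcongr
          _ = (4 * π) ^ d * Real.exp (4 * π) * ((k - d).factorial : ℝ) := by ring
      have heq : 4 / (2 * π) ^ m * ((4 * π) ^ d * Real.exp (4 * π) / (2 * π) ^ k) * R ^ i
          = K * q ^ i := by
        rw [hq, div_pow, ← hmk, pow_add, hK]
        have h1 : ((2 : ℝ) * π) ^ m ≠ 0 := by positivity
        have h2 : ((2 : ℝ) * π) ^ k ≠ 0 := by positivity
        field_simp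
        ring
      calc |((bernoulli m : ℝ) / (m.factorial : ℝ)) *
            (((d + 1).factorial : ℝ) / ((k + 1).factorial : ℝ)) *
            (((k - (d + 1)).choose d : ℕ) : ℝ)| * R ^ i
          ≤ (4 / (2 * π) ^ m) * ((2 : ℝ) ^ k / ((k - d).factorial : ℝ)) * R ^ i := by
            rw [habs]
            have hx : 0 ≤ R ^ i := by positivity
            refine mul_le_mul_of_nonneg_right ?_ hx
            refine mul_le_mul b1 b23 ?_ (by positivity)
            positivity
        _ ≤ (4 / (2 * π) ^ m) * ((4 * π) ^ d * Real.exp (4 * π) / (2 * π) ^ k) * R ^ i := by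
            gcongr
        _ = K * q ^ i := heq
    calc gammaCoeff d i * R ^ i
        ≤ (∑ m ∈ range (n + 1),
            |((bernoulli m : ℝ) / (m.factorial : ℝ)) *
              (((d + 1).factorial : ℝ) / ((1 + i - m).factorial : ℝ)) *
              (((i - m - (d + 1)).choose d : ℕ) : ℝ)|) * R ^ i := by
          refine mul_le_mul_of_nonneg_right ?_ (by positivity)
          rw [gammaCoeff, hrange]
          exact Finset.abs_sum_le_sum_abs _ _
      _ = ∑ m ∈ range (n + 1),
            |((bernoulli m : ℝ) / (m.factorial : ℝ)) *
              (((d + 1).factorial : ℝ) / ((1 + i - m).factorial : ℝ)) *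
              (((i - m - (d + 1)).choose d : ℕ) : ℝ)| * R ^ i := Finset.sum_mul _ _ _
      _ ≤ ∑ _m ∈ range (n + 1), K * q ^ i := Finset.sum_le_sum hterm
      _ = ((n : ℝ) + 1) * (K * q ^ i) := by
          rw [Finset.sum_const, card_range, nsmul_eq_mul]; push_cast; ring
      _ ≤ K * (((n : ℝ) + 1) * q ^ n) := by
          have hqi : q ^ i ≤ q ^ n := pow_le_pow_of_le_one hq0 hq1.le (by omega)
          have : ((n : ℝ) + 1) * (K * q ^ i) ≤ ((n : ℝ) + 1) * (K * q ^ n) := by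
            gcongr
          linarith
end

section
/- For every integer ℓ ≥ 1 and every z ∈ ℂ, φ_ℓ(2z) = 2^{−ℓ} [ e^z φ_ℓ(z) + Σ_{j=1}^{ℓ} φ_j(z)/(ℓ−j)! ]. -/
open Finset

lemma phi_summable (ℓ : ℕ) (z : ℂ) :
    Summable fun k : ℕ => z ^ k / ((ℓ + k).factorial : ℂ) := by
  apply Summable.of_norm
  have h1 : ∀ k : ℕ, ‖z ^ k / ((ℓ + k).factorial : ℂ)‖
      = ‖z‖ ^ k / ((ℓ + k).factorial : ℝ) := by
    intro k
    rw [norm_div, norm_pow]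
    norm_num
  refine Summable.of_nonneg_of_le (fun k => norm_nonneg _) (fun k => ?_)
    (Real.summable_pow_div_factorial ‖z‖)
  rw [h1 k]
  gcongr
  omega

lemma exp_tsum (z : ℂ) : Complex.exp z = ∑' n : ℕ, z ^ n / (n.factorial : ℂ) := by
  rw [Complex.exp_eq_exp_ℂ, NormedSpace.exp_eq_tsum_div]

lemma exp_summable (z : ℂ) : Summable fun n : ℕ => z ^ n / (n.factorial : ℂ) := by
  have := phi_summable 0 z
  simpa using this

lemma pow_mul_phi (ℓ : ℕ) (z : ℂ) :
    z ^ ℓ * phiC ℓ z = Complex.exp z - ∑ k ∈ range ℓ, z ^ k / (k.factorial : ℂ) := by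
  have h := Summable.sum_add_tsum_nat_add (f := fun n : ℕ => z ^ n / (n.factorial : ℂ)) ℓ
    (exp_summable z)
  rw [phiC, ← tsum_mul_left]
  have h2 : ∀ k : ℕ, z ^ ℓ * (z ^ k / ((ℓ + k).factorial : ℂ))
      = z ^ (k + ℓ) / (((k + ℓ).factorial : ℕ) : ℂ) := by
    intro k
    rw [pow_add]
    rw [Nat.add_comm ℓ k] at *
    ring
  rw [tsum_congr h2, exp_tsum, ← h]
  ring

lemma binom (n : ℕ) :
    ∑ i ∈ range (n + 1), (1 : ℂ) / ((i.factorial : ℂ) * ((n - i).factorial : ℂ))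
      = 2 ^ n / (n.factorial : ℂ) := by
  have hn : ((n.factorial : ℂ)) ≠ 0 := by exact_mod_cast n.factorial_ne_zero
  rw [eq_div_iff hn, Finset.sum_mul]
  have : ∀ i ∈ range (n + 1),
      (1 : ℂ) / ((i.factorial : ℂ) * ((n - i).factorial : ℂ)) * (n.factorial : ℂ)
        = (n.choose i : ℂ) := by
    intro i hi
    have hi' : i ≤ n := by simpa using Nat.lt_succ_iff.mp (Finset.mem_range.mp hi)
    have h := Nat.choose_mul_factorial_mul_factorial hi'
    have hfi : ((i.factorial : ℂ)) ≠ 0 := by exact_mod_cast i.factorial_ne_zero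
    have hfn : (((n - i).factorial : ℂ)) ≠ 0 := by exact_mod_cast (n - i).factorial_ne_zero
    field_simp
    exact_mod_cast (by rw [← h]; ring :
      n.factorial = i.factorial * (n - i).factorial * n.choose i)
  rw [Finset.sum_congr rfl this]
  exact_mod_cast congrArg (Nat.cast : ℕ → ℂ) (Nat.sum_range_choose n)

lemma key (z : ℂ) (ℓ : ℕ) :
    ∑ i ∈ range ℓ, z ^ i / (i.factorial : ℂ) * (∑ k ∈ range (ℓ - i), z ^ k / (k.factorial : ℂ))
      = ∑ m ∈ range ℓ, (2 * z) ^ m / (m.factorial : ℂ) := by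
  induction ℓ with
  | zero => simp
  | succ n ih =>
    rw [Finset.sum_range_succ, Finset.sum_range_succ (f := fun m => (2 * z) ^ m / _)]
    have step : ∀ i ∈ range n,
        z ^ i / (i.factorial : ℂ) * (∑ k ∈ range (n + 1 - i), z ^ k / (k.factorial : ℂ))
          = z ^ i / (i.factorial : ℂ) * (∑ k ∈ range (n - i), z ^ k / (k.factorial : ℂ))
            + z ^ n * ((1 : ℂ) / ((i.factorial : ℂ) * ((n - i).factorial : ℂ))) := by
      intro i hi
      have hi' : i < n := Finset.mem_range.mp hi
      have h1 : n + 1 - i = (n - i) + 1 := by omega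
      rw [h1, Finset.sum_range_succ, mul_add]
      congr 1
      have h2 : z ^ i * z ^ (n - i) = z ^ n := by rw [← pow_add]; congr 1; omega
      rw [← h2]
      ring
    rw [Finset.sum_congr rfl step, Finset.sum_add_distrib, ih, ← Finset.mul_sum]
    have h3 : n + 1 - n = 1 := by omega
    rw [h3]
    have h4 : z ^ n * (∑ i ∈ range n, (1 : ℂ) / ((i.factorial : ℂ) * ((n - i).factorial : ℂ)))
        + z ^ n / (n.factorial : ℂ) * (∑ k ∈ range 1, z ^ k / (k.factorial : ℂ))
          = z ^ n * (∑ i ∈ range (n + 1), (1 : ℂ) / ((i.factorial : ℂ) * ((n - i).factorial : ℂ))) := by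
      rw [Finset.sum_range_succ
        (f := fun i => (1 : ℂ) / ((i.factorial : ℂ) * (((n - i).factorial : ℂ))))]
      have h5 : (∑ k ∈ range 1, z ^ k / (k.factorial : ℂ)) = 1 := by simp
      rw [h5, Nat.sub_self, show ((Nat.factorial 0 : ℕ) : ℂ) = 1 by norm_num]
      ring
    have hgoal : (2 * z) ^ n / (n.factorial : ℂ) = z ^ n * (2 ^ n / (n.factorial : ℂ)) := by
      rw [mul_pow]; ring
    rw [add_assoc, h4, binom, hgoal]

lemma sum_Icc_eq {M : Type*} [AddCommMonoid M] (ℓ : ℕ) (F : ℕ → M) :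
    ∑ j ∈ Finset.Icc 1 ℓ, F j = ∑ i ∈ Finset.range ℓ, F (ℓ - i) := by
  rw [show Finset.Icc 1 ℓ = Finset.Ico 1 (ℓ + 1) from by rw [Finset.Ico_add_one_right_eq_Icc]]
  rw [Finset.sum_Ico_eq_sum_range]
  rw [show ℓ + 1 - 1 = ℓ from rfl]
  rw [← Finset.sum_range_reflect (fun i => F (1 + i)) ℓ]
  apply Finset.sum_congr rfl
  intro i hi
  have := Finset.mem_range.mp hi
  congr 1
  omega

lemma sum_part (ℓ : ℕ) (z : ℂ) :
    ∑ j ∈ Finset.Icc 1 ℓ, z ^ ℓ * phiC j z / (((ℓ - j).factorial : ℕ) : ℂ)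
      = Complex.exp z * (∑ k ∈ range ℓ, z ^ k / (k.factorial : ℂ))
        - ∑ m ∈ range ℓ, (2 * z) ^ m / (m.factorial : ℂ) := by
  rw [sum_Icc_eq ℓ (fun j => z ^ ℓ * phiC j z / (((ℓ - j).factorial : ℕ) : ℂ))]
  rw [← key z ℓ, Finset.mul_sum, ← Finset.sum_sub_distrib]
  apply Finset.sum_congr rfl
  intro i hi
  have hi' : i < ℓ := Finset.mem_range.mp hi
  rw [show ℓ - (ℓ - i) = i from by omega]
  have h1 : z ^ ℓ * phiC (ℓ - i) z = z ^ i * (z ^ (ℓ - i) * phiC (ℓ - i) z) := by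
    rw [← mul_assoc, ← pow_add]
    congr 2
    omega
  rw [h1, pow_mul_phi]
  ring

lemma phi_zero (ℓ : ℕ) : phiC ℓ 0 = 1 / (ℓ.factorial : ℂ) := by
  rw [phiC, tsum_eq_single 0]
  · simp
  · intro k hk
    simp [zero_pow hk]

/-- For every integer `ℓ ≥ 1` and every `z ∈ ℂ`,
`φ_ℓ(2z) = 2^{−ℓ} [ e^z φ_ℓ(z) + Σ_{j=1}^{ℓ} φ_j(z)/(ℓ−j)! ]`. -/
theorem stmt10 (ℓ : ℕ) (hℓ : 1 ≤ ℓ) (z : ℂ) :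
    phiC ℓ (2 * z) =
      ((2 : ℂ) ^ ℓ)⁻¹ *
        (Complex.exp z * phiC ℓ z +
          ∑ j ∈ Finset.Icc 1 ℓ, phiC j z / (((ℓ - j).factorial : ℕ) : ℂ)) := by
  have h2 : ((2 : ℂ) ^ ℓ) ≠ 0 := pow_ne_zero _ two_ne_zero
  rcases eq_or_ne z 0 with rfl | hz
  · rw [mul_zero, phi_zero, Complex.exp_zero]
    have hsum : ∑ j ∈ Finset.Icc 1 ℓ, phiC j 0 / (((ℓ - j).factorial : ℕ) : ℂ)
        = 2 ^ ℓ / (ℓ.factorial : ℂ) - 1 / (ℓ.factorial : ℂ) := by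
      rw [← binom ℓ]
      have hIcc : Finset.Icc 1 ℓ = (Finset.range (ℓ + 1)).erase 0 := by
        ext a; simp [Finset.mem_Icc, Finset.mem_range]; omega
      rw [hIcc]
      rw [Finset.sum_erase_eq_sub (by simp : (0 : ℕ) ∈ Finset.range (ℓ + 1))]
      congr 1
      · apply Finset.sum_congr rfl
        intro j hj
        rw [phi_zero, div_div]
      · rw [phi_zero]
        simp
    rw [hsum]
    field_simp
    ring
  · have hzl : z ^ ℓ ≠ 0 := pow_ne_zero _ hz
    have main : (2 * z) ^ ℓ * phiC ℓ (2 * z)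
        = Complex.exp z * (z ^ ℓ * phiC ℓ z)
          + ∑ j ∈ Finset.Icc 1 ℓ, z ^ ℓ * phiC j z / (((ℓ - j).factorial : ℕ) : ℂ) := by
      rw [pow_mul_phi ℓ (2 * z), pow_mul_phi ℓ z, sum_part]
      have he : Complex.exp z * Complex.exp z = Complex.exp (2 * z) := by
        rw [← Complex.exp_add, two_mul]
      linear_combination -he
    rw [inv_mul_eq_div, eq_div_iff h2]
    apply mul_left_cancel₀ hzl
    have e1 : z ^ ℓ * (phiC ℓ (2 * z) * 2 ^ ℓ) = (2 * z) ^ ℓ * phiC ℓ (2 * z) := by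
      rw [mul_pow]; ring
    rw [e1, main, mul_add, Finset.mul_sum]
    congr 1
    · ring
    · apply Finset.sum_congr rfl
      intro j hj
      rw [mul_div_assoc]
end

section
/- For every integer ℓ ≥ 1 and every real number z < 0, φ_ℓ(2z)/φ_ℓ(z) ≥ (ℓ(ℓ+1−z)) / ((ℓ+1)(ℓ−2z)). -/
open intervalIntegral MeasureTheory

/-- For an integer `ℓ ≥ 0` and real `x`, `φ_ℓ(x) := Σ_{k=0}^∞ x^k/(ℓ+k)!` (real valued). -/
noncomputable def phiR (ℓ : ℕ) (x : ℝ) : ℝ := ∑' k : ℕ, x ^ k / ((ℓ + k).factorial : ℝ)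

lemma beta_nat : ∀ (m k : ℕ), (∫ u in (0:ℝ)..1, u ^ k * (1 - u) ^ m)
    = (k.factorial * m.factorial : ℝ) / ((k + m + 1).factorial) := by
  intro m
  induction m with
  | zero =>
    intro k
    have hk : ((k:ℝ) + 1) ≠ 0 := by positivity
    have hf : (k.factorial : ℝ) ≠ 0 := by positivity
    simp [integral_pow, Nat.factorial_succ]
    field_simp
  | succ m ih =>
    intro k
    have hk1 : ((k:ℝ) + 1) ≠ 0 := by positivity
    have hparts := intervalIntegral.integral_mul_deriv_eq_deriv_mul
      (u := fun x : ℝ => (1 - x) ^ (m + 1))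
      (u' := fun x : ℝ => -((m + 1 : ℝ) * (1 - x) ^ m))
      (v := fun x : ℝ => x ^ (k + 1) / (k + 1))
      (v' := fun x : ℝ => x ^ k) (a := (0:ℝ)) (b := 1)
      (fun x _ => by
        have h1 : HasDerivAt (fun x : ℝ => 1 - x) (-1) x := by
          simpa using (hasDerivAt_id' x).const_sub (1:ℝ)
        simpa [mul_comm, mul_assoc, mul_left_comm] using (h1.fun_pow (m + 1)))
      (fun x _ => by
        have h2 := (hasDerivAt_pow (k + 1) x).div_const (k + 1)
        have he : ((k:ℝ) + 1) * x ^ (k + 1 - 1) / ((k:ℝ) + 1) = x ^ k := by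
          field_simp
          simp
        convert h2 using 1
        push_cast
        field_simp)
      ((Continuous.intervalIntegrable (by continuity) _ _))
      ((Continuous.intervalIntegrable (by continuity) _ _))
    have hswap : (∫ u in (0:ℝ)..1, u ^ k * (1 - u) ^ (m+1))
        = ∫ x in (0:ℝ)..1, (1 - x) ^ (m + 1) * x ^ k := by
      congr 1; ext u; ring
    rw [hswap, hparts]
    have : (∫ x in (0:ℝ)..1, -((m + 1 : ℝ) * (1 - x) ^ m) * (x ^ (k + 1) / (k + 1)))
        = -((m+1:ℝ)/(k+1)) * ∫ x in (0:ℝ)..1, x ^ (k+1) * (1 - x) ^ m := by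
      rw [← intervalIntegral.integral_const_mul]
      congr 1; ext x; field_simp
    rw [this, ih (k+1)]
    have e1 : ((k + (m + 1) + 1).factorial : ℝ) = ((k + 1 + m + 1).factorial : ℝ) := by
      norm_num; ring_nf
    have hfpos : (0:ℝ) < ((k + 1 + m + 1).factorial : ℝ) := by positivity
    rw [e1]
    have hfs : ((k+1).factorial : ℝ) = (k+1) * k.factorial := by
      rw [Nat.factorial_succ]; push_cast; ring
    have hms : ((m+1).factorial : ℝ) = (m+1) * m.factorial := by
      rw [Nat.factorial_succ]; push_cast; ring
    rw [hfs, hms]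
    simp only [one_pow, zero_pow, Nat.cast_ofNat]
    field_simp
    ring

lemma exp_tsum_s12 (y : ℝ) : Real.exp y = ∑' k : ℕ, y ^ k / (k.factorial : ℝ) := by
  rw [Real.exp_eq_exp_ℝ, NormedSpace.exp_eq_tsum_div]

lemma phi_int (m : ℕ) (x : ℝ) :
    (m.factorial : ℝ) * phiR (m + 1) x = ∫ u in (0:ℝ)..1, (1 - u) ^ m * Real.exp (x * u) := by
  have h01 : (0:ℝ) ≤ 1 := by norm_num
  set F : ℕ → ℝ → ℝ := fun k u => (1 - u) ^ m * ((x * u) ^ k / (k.factorial : ℝ)) with hF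
  have hcont : ∀ k, Continuous (F k) := by
    intro k; fun_prop
  have hFint : ∀ k, Integrable (F k) (volume.restrict (Set.Ioc (0:ℝ) 1)) := fun k =>
    (hcont k).integrableOn_Ioc
  have hbound : ∀ k, ∀ u ∈ Set.Ioc (0:ℝ) 1, ‖F k u‖ ≤ |x| ^ k / (k.factorial : ℝ) := by
    intro k u hu
    obtain ⟨hu0, hu1⟩ := hu
    have h1 : |1 - u| ≤ 1 := by rw [abs_le]; constructor <;> nlinarith
    have h2 : |u| ≤ 1 := by rw [abs_le]; constructor <;> nlinarith
    have e : ‖F k u‖ = |1 - u| ^ m * ((|x| * |u|) ^ k / (k.factorial : ℝ)) := by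
      rw [hF]
      simp only [Real.norm_eq_abs, abs_mul, abs_div, abs_pow, Nat.abs_cast]
    rw [e]
    calc |1 - u| ^ m * ((|x| * |u|) ^ k / (k.factorial : ℝ))
        ≤ 1 ^ m * ((|x| * 1) ^ k / (k.factorial : ℝ)) := by
          gcongr
      _ = |x| ^ k / (k.factorial : ℝ) := by rw [one_pow, mul_one, one_mul]
  have hFsum : Summable fun k => ∫ u in Set.Ioc (0:ℝ) 1, ‖F k u‖ := by
    apply Summable.of_nonneg_of_le (fun k => integral_nonneg (fun u => norm_nonneg _))
      (fun k => ?_) (Real.summable_pow_div_factorial |x|)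
    calc (∫ u in Set.Ioc (0:ℝ) 1, ‖F k u‖)
        ≤ ∫ _u in Set.Ioc (0:ℝ) 1, |x| ^ k / (k.factorial : ℝ) := by
          apply setIntegral_mono_on ((hFint k).norm) (integrable_const _)
            measurableSet_Ioc (hbound k)
      _ = |x| ^ k / (k.factorial : ℝ) := by
          simp [Real.volume_Ioc]
  have hswap := integral_tsum_of_summable_integral_norm hFint hFsum
  have hpt : ∀ u : ℝ, (∑' k, F k u) = (1 - u) ^ m * Real.exp (x * u) := by
    intro u
    rw [exp_tsum_s12 (x * u), ← tsum_mul_left]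
  have hval : ∀ k, (∫ u in Set.Ioc (0:ℝ) 1, F k u)
      = (m.factorial : ℝ) * (x ^ k / ((m + 1 + k).factorial : ℝ)) := by
    intro k
    have : (∫ u in Set.Ioc (0:ℝ) 1, F k u) = ∫ u in (0:ℝ)..1, F k u := by
      rw [intervalIntegral.integral_of_le h01]
    rw [this]
    have : (∫ u in (0:ℝ)..1, F k u)
        = (x ^ k / (k.factorial : ℝ)) * ∫ u in (0:ℝ)..1, u ^ k * (1 - u) ^ m := by
      rw [← intervalIntegral.integral_const_mul]
      congr 1; ext u; rw [hF]; ring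
    rw [this, beta_nat m k]
    have hfk : ((k.factorial : ℝ)) ≠ 0 := by positivity
    have hfm : (((k + m + 1).factorial : ℝ)) ≠ 0 := by positivity
    have : ((m + 1 + k).factorial : ℝ) = ((k + m + 1).factorial : ℝ) := by
      congr 1; ring
    rw [this]
    field_simp
  rw [intervalIntegral.integral_of_le h01]
  calc (m.factorial : ℝ) * phiR (m + 1) x
      = ∑' k, (m.factorial : ℝ) * (x ^ k / ((m + 1 + k).factorial : ℝ)) := by
        rw [phiR, tsum_mul_left]
    _ = ∑' k, ∫ u in Set.Ioc (0:ℝ) 1, F k u := by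
        congr 1; ext k; rw [hval k]
    _ = ∫ u in Set.Ioc (0:ℝ) 1, ∑' k, F k u := hswap
    _ = ∫ u in Set.Ioc (0:ℝ) 1, (1 - u) ^ m * Real.exp (x * u) := by
        congr 1; ext u; rw [hpt u]

lemma phi_pos (m : ℕ) (x : ℝ) : 0 < phiR (m + 1) x := by
  have h := phi_int m x
  have hpos : 0 < ∫ u in (0:ℝ)..1, (1 - u) ^ m * Real.exp (x * u) := by
    apply intervalIntegral.intervalIntegral_pos_of_pos_on
    · exact (Continuous.intervalIntegrable (by fun_prop) _ _)
    · intro u hu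
      obtain ⟨h0, h1⟩ := hu
      have : (0:ℝ) < 1 - u := by linarith
      positivity
    · norm_num
  have hm : (0:ℝ) < (m.factorial : ℝ) := by positivity
  nlinarith [h]

/-- For every integer `ℓ ≥ 1` and every real `z < 0`,
`φ_ℓ(2z)/φ_ℓ(z) ≥ ℓ(ℓ+1−z)/((ℓ+1)(ℓ−2z))`. -/
theorem stmt12 (ℓ : ℕ) (hℓ : 1 ≤ ℓ) (z : ℝ) (hz : z < 0) :
    phiR ℓ (2 * z) / phiR ℓ z ≥
      ((ℓ : ℝ) * ((ℓ : ℝ) + 1 - z)) / (((ℓ : ℝ) + 1) * ((ℓ : ℝ) - 2 * z)) := by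
  obtain ⟨m, rfl⟩ : ∃ m, ℓ = m + 1 := ⟨ℓ - 1, (Nat.succ_pred_eq_of_pos hℓ).symm⟩
  have hLcast : ((m + 1 : ℕ) : ℝ) = (m : ℝ) + 1 := by push_cast; ring
  have hφ1 : 0 < phiR (m + 1) z := phi_pos m z
  have hφ2 : 0 < phiR (m + 1) (2 * z) := phi_pos m (2 * z)
  have hD : 0 < ((m:ℝ)+2) * ((m:ℝ)+1-2*z) := by nlinarith
  -- key inequality
  set F : ℝ → ℝ := fun u =>
    (((m:ℝ)+2)*((m:ℝ)+1-2*z)*Real.exp (2*z*u) - ((m:ℝ)+1)*((m:ℝ)+2-z)*Real.exp (z*u)) * (1-u)^m with hFdef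
  set G : ℝ → ℝ := fun u =>
    (-(2*z))*((m:ℝ)+2)*u*(1-u)^m*Real.exp (2*z*u) + z^2*u*(1-u)^(m+1)*Real.exp (z*u) with hGdef
  set H : ℝ → ℝ := fun u =>
    -((m:ℝ)+2)*((1-u)^(m+1)*Real.exp (2*z*u)) + ((m:ℝ)+2-z*u)*((1-u)^(m+1)*Real.exp (z*u)) with hHdef
  have hH : ∀ u : ℝ, HasDerivAt H (F u - G u) u := by
    intro u
    have hp : HasDerivAt (fun u : ℝ => (1-u)^(m+1)) (-((m+1:ℝ) * (1-u)^m)) u := by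
      have h1 : HasDerivAt (fun u : ℝ => 1 - u) (-1) u := by
        simpa using (hasDerivAt_id' u).const_sub (1:ℝ)
      simpa [mul_comm, mul_assoc, mul_left_comm] using (h1.fun_pow (m + 1))
    have he2 : HasDerivAt (fun u : ℝ => Real.exp (2*z*u)) (2*z*Real.exp (2*z*u)) u := by
      have h := ((hasDerivAt_id u).const_mul (2*z)).exp
      simpa [mul_comm] using h
    have he1 : HasDerivAt (fun u : ℝ => Real.exp (z*u)) (z*Real.exp (z*u)) u := by
      have h := ((hasDerivAt_id u).const_mul z).exp
      simpa [mul_comm] using h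
    have hq : HasDerivAt (fun u : ℝ => (m:ℝ)+2-z*u) (-z) u := by
      simpa using ((hasDerivAt_id' u).const_mul z).const_sub ((m:ℝ)+2)
    have hd1 := ((hp.mul he2).const_mul (-((m:ℝ)+2)))
    have hd2 := (hq.mul (hp.mul he1))
    have hd := hd1.add hd2
    have : HasDerivAt H
        (-((m:ℝ)+2)*((-((m+1:ℝ)*(1-u)^m))*Real.exp (2*z*u) + (1-u)^(m+1)*(2*z*Real.exp (2*z*u)))
          + ((-z)*((1-u)^(m+1)*Real.exp (z*u))
            + ((m:ℝ)+2-z*u)*((-((m+1:ℝ)*(1-u)^m))*Real.exp (z*u) + (1-u)^(m+1)*(z*Real.exp (z*u))))) u := by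
      exact hd
    convert this using 1
    rw [hFdef, hGdef]
    simp only [pow_succ]
    ring
  have hFGint : ∫ u in (0:ℝ)..1, (F u - G u) = H 1 - H 0 := by
    apply intervalIntegral.integral_eq_sub_of_hasDerivAt (fun u _ => hH u)
    exact (Continuous.intervalIntegrable (by rw [hFdef, hGdef]; fun_prop) _ _)
  have hH10 : H 1 - H 0 = 0 := by
    rw [hHdef]
    norm_num
  have hGnonneg : 0 ≤ ∫ u in (0:ℝ)..1, G u := by
    apply intervalIntegral.integral_nonneg (by norm_num)
    intro u hu
    obtain ⟨h0, h1⟩ := hu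
    have h1u : (0:ℝ) ≤ 1 - u := by linarith
    have : (0:ℝ) ≤ -(2*z) := by linarith
    rw [hGdef]
    positivity
  have hFint2 : ∫ u in (0:ℝ)..1, F u = ∫ u in (0:ℝ)..1, G u := by
    have hGi : IntervalIntegrable G volume 0 1 :=
      (Continuous.intervalIntegrable (by rw [hGdef]; fun_prop) _ _)
    have hFi : IntervalIntegrable F volume 0 1 :=
      (Continuous.intervalIntegrable (by rw [hFdef]; fun_prop) _ _)
    have := intervalIntegral.integral_sub hFi hGi
    rw [hFGint, hH10] at this
    linarith [this]
  have hFsplit : ∫ u in (0:ℝ)..1, F u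
      = ((m:ℝ)+2)*((m:ℝ)+1-2*z) * ((m.factorial : ℝ) * phiR (m+1) (2*z))
        - ((m:ℝ)+1)*((m:ℝ)+2-z) * ((m.factorial : ℝ) * phiR (m+1) z) := by
    rw [phi_int m (2*z), phi_int m z]
    rw [hFdef]
    rw [← intervalIntegral.integral_const_mul, ← intervalIntegral.integral_const_mul,
      ← intervalIntegral.integral_sub
        (Continuous.intervalIntegrable (by fun_prop) _ _)
        (Continuous.intervalIntegrable (by fun_prop) _ _)]
    congr 1; ext u; ring
  have hmf : (0:ℝ) < (m.factorial : ℝ) := by positivity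
  have key : 0 ≤ ((m:ℝ)+2)*((m:ℝ)+1-2*z) * phiR (m+1) (2*z) - ((m:ℝ)+1)*((m:ℝ)+2-z) * phiR (m+1) z := by
    have h0 : 0 ≤ ∫ u in (0:ℝ)..1, F u := hFint2 ▸ hGnonneg
    rw [hFsplit] at h0
    nlinarith [h0]
  rw [ge_iff_le, hLcast, div_le_div_iff₀ (by nlinarith : (0:ℝ) < ((m:ℝ)+1+1)*((m:ℝ)+1-2*z)) hφ1]
  nlinarith [key, hφ1, hφ2]
end

section
/- For every integer ℓ ≥ 1 and every real number z ≤ 0, |1 − φ_ℓ(2z)/φ_ℓ(z)| < 1/2. -/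
noncomputable def Rf (ℓ : ℕ) (t : ℝ) : ℝ :=
  (-1 : ℝ) ^ ℓ * (Real.exp (-t) - ∑ j ∈ Finset.range ℓ, (-t) ^ j / (j.factorial : ℝ))

lemma hasDerivAt_S (n : ℕ) (t : ℝ) :
    HasDerivAt (fun x : ℝ => ∑ j ∈ Finset.range (n+1), (-x) ^ j / (j.factorial : ℝ))
      (-∑ j ∈ Finset.range n, (-t) ^ j / (j.factorial : ℝ)) t := by
  have h : ∀ j ∈ Finset.range (n+1),
      HasDerivAt (fun x : ℝ => (-x) ^ j / (j.factorial : ℝ))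
        ((j : ℝ) * (-t) ^ (j-1) * (-1) / (j.factorial : ℝ)) t := by
    intro j _
    exact (((hasDerivAt_id t).neg).pow j).div_const _
  have hsum := HasDerivAt.fun_sum h
  convert hsum using 1
  case e'_4 => rfl
  case e'_5 => rfl
  rw [Finset.sum_range_succ', neg_eq_iff_eq_neg] at *
  simp only [Nat.cast_zero, zero_mul, Nat.factorial_zero, Nat.cast_one, zero_div, add_zero]
  rw [← Finset.sum_neg_distrib]
  refine Finset.sum_congr rfl fun i _ => ?_
  have : ((i+1).factorial : ℝ) = (i+1) * i.factorial := by
    rw [Nat.factorial_succ]; push_cast; ring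
  rw [this]
  have hi : (i.factorial : ℝ) ≠ 0 := Nat.cast_ne_zero.2 i.factorial_ne_zero
  field_simp
  rw [Nat.add_sub_cancel]; push_cast
  ring

lemma hasDerivAt_Rf (ℓ : ℕ) (t : ℝ) : HasDerivAt (Rf (ℓ+1)) (Rf ℓ t) t := by
  have hexp : HasDerivAt (fun x : ℝ => Real.exp (-x)) (-Real.exp (-t)) t := by
    exact ((Real.hasDerivAt_exp (-t)).comp t ((hasDerivAt_id t).neg)).congr_deriv (by simp)
  have h := ((hexp.sub (hasDerivAt_S ℓ t)).const_mul ((-1 : ℝ) ^ (ℓ+1)))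
  convert h using 1
  case e'_4 => rfl
  case e'_5 => rfl
  case e'_8 => rfl
  unfold Rf
  rw [pow_succ]
  ring

lemma Rf_zero (ℓ : ℕ) : Rf (ℓ+1) 0 = 0 := by
  unfold Rf
  rw [Finset.sum_range_succ']
  simp [Real.exp_zero]

lemma Rf_cont (ℓ : ℕ) : Continuous (Rf ℓ) := by
  unfold Rf
  fun_prop

lemma Rf_pos : ∀ ℓ : ℕ, ∀ t : ℝ, 0 < t → 0 < Rf ℓ t := by
  intro ℓ
  induction ℓ with
  | zero => intro t _; unfold Rf; simp [Real.exp_pos]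
  | succ m ih =>
    intro t ht
    have hmono : StrictMonoOn (Rf (m+1)) (Set.Ici (0:ℝ)) := by
      refine strictMonoOn_of_deriv_pos (convex_Ici 0) (Rf_cont (m+1)).continuousOn ?_
      intro x hx
      rw [interior_Ici] at hx
      rw [(hasDerivAt_Rf m x).deriv]
      cases Nat.eq_zero_or_pos m with
      | inl h0 => subst h0; unfold Rf; simp [Real.exp_pos]
      | inr hpos =>
        obtain ⟨k, rfl⟩ := Nat.exists_eq_add_of_lt hpos
        exact ih x hx
    have := hmono (Set.self_mem_Ici) (Set.mem_Ici.2 ht.le) ht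
    rwa [Rf_zero] at this

lemma hasDerivAt_Rf2 (ℓ : ℕ) (t : ℝ) :
    HasDerivAt (fun x => Rf (ℓ+1) (2*x)) (2 * Rf ℓ (2*t)) t := by
  have h2 : HasDerivAt (fun x : ℝ => 2*x) 2 t := by
    simpa using (hasDerivAt_id t).const_mul 2
  have h := (hasDerivAt_Rf ℓ (2*t)).comp t h2
  rw [Function.comp_def] at h
  convert h using 1
  case e'_4 => rfl
  case e'_5 => rfl
  ring

lemma RC : ∀ ℓ : ℕ, ∀ t : ℝ, 0 ≤ t → Rf ℓ (2*t) ≤ 2^ℓ * Rf ℓ t := by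
  intro ℓ
  induction ℓ with
  | zero =>
    intro t ht
    unfold Rf
    simp only [pow_zero, one_mul, Finset.range_zero, Finset.sum_empty, sub_zero]
    exact Real.exp_le_exp.2 (by linarith)
  | succ m ih =>
    intro t ht
    have hmono : MonotoneOn (fun x => 2^(m+1) * Rf (m+1) x - Rf (m+1) (2*x)) (Set.Ici (0:ℝ)) := by
      refine monotoneOn_of_deriv_nonneg (convex_Ici 0)
        ((continuous_const.mul (Rf_cont (m+1))).sub ((Rf_cont (m+1)).comp (by fun_prop))).continuousOn
        (fun x hx => ?_) (fun x hx => ?_)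
      · exact (((hasDerivAt_Rf m x).const_mul _).sub (hasDerivAt_Rf2 m x)).differentiableAt.differentiableWithinAt
      · rw [interior_Ici] at hx
        rw [(((hasDerivAt_Rf m x).const_mul _).fun_sub (hasDerivAt_Rf2 m x)).deriv]
        have := ih x hx.le
        rw [pow_succ]
        nlinarith
    have h0 : (fun x => 2^(m+1) * Rf (m+1) x - Rf (m+1) (2*x)) 0 = 0 := by
      simp [Rf_zero]
    have := hmono Set.self_mem_Ici (Set.mem_Ici.2 ht) ht
    rw [h0] at this
    simp only [] at this
    linarith [this]

lemma RD : ∀ m : ℕ, ∀ t : ℝ, 0 < t → 2^m * Rf (m+1) t < Rf (m+1) (2*t) := by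
  intro m
  induction m with
  | zero =>
    intro t ht
    have e : ∀ s : ℝ, Rf 1 s = 1 - Real.exp (-s) := by
      intro s; unfold Rf; norm_num
    rw [show (0:ℕ)+1 = 1 from rfl, e, e]
    have : Real.exp (-(2*t)) < Real.exp (-t) := Real.exp_lt_exp.2 (by linarith)
    norm_num
    linarith
  | succ m ih =>
    intro t ht
    have hmono : StrictMonoOn (fun x => Rf (m+2) (2*x) - 2^(m+1) * Rf (m+2) x) (Set.Ici (0:ℝ)) := by
      refine strictMonoOn_of_deriv_pos (convex_Ici 0)
        (((Rf_cont (m+2)).comp (by fun_prop)).sub (continuous_const.mul (Rf_cont (m+2)))).continuousOn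
        (fun x hx => ?_)
      rw [interior_Ici] at hx
      rw [((hasDerivAt_Rf2 (m+1) x).fun_sub ((hasDerivAt_Rf (m+1) x).const_mul _)).deriv]
      have := ih x hx
      rw [pow_succ]
      nlinarith
    have := hmono Set.self_mem_Ici (Set.mem_Ici.2 ht.le) ht
    simp only [mul_zero, Rf_zero, sub_zero] at this
    linarith [this]

lemma phiR_summable (ℓ : ℕ) (z : ℝ) : Summable (fun k : ℕ => z ^ k / ((ℓ + k).factorial : ℝ)) := by
  refine Summable.of_norm_bounded (Real.summable_pow_div_factorial |z|) (fun k => ?_)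
  rw [norm_div, norm_pow, Real.norm_eq_abs, Real.norm_eq_abs]
  rw [Nat.abs_cast]
  apply div_le_div_of_nonneg_left ?_ ?_ ?_
  · positivity
  · exact_mod_cast k.factorial_pos
  · exact_mod_cast Nat.factorial_le (Nat.le_add_left k ℓ)

lemma phiR_key (ℓ : ℕ) (z : ℝ) :
    z ^ ℓ * phiR ℓ z = Real.exp z - ∑ j ∈ Finset.range ℓ, z ^ j / (j.factorial : ℝ) := by
  have hs : Summable (fun n : ℕ => z ^ n / (n.factorial : ℝ)) := Real.summable_pow_div_factorial z
  have hexp : Real.exp z = ∑' n : ℕ, z ^ n / (n.factorial : ℝ) := by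
    rw [Real.exp_eq_exp_ℝ, NormedSpace.exp_eq_tsum_div]
  have hsplit := Summable.sum_add_tsum_nat_add ℓ hs
  have htail : (∑' k : ℕ, z ^ (k + ℓ) / ((k + ℓ).factorial : ℝ)) = z ^ ℓ * phiR ℓ z := by
    unfold phiR
    rw [← tsum_mul_left]
    refine tsum_congr fun k => ?_
    rw [pow_add, Nat.add_comm k ℓ]
    ring
  rw [htail] at hsplit
  rw [hexp, ← hsplit]
  ring

lemma phiR_Rf (ℓ : ℕ) (t : ℝ) (ht : 0 < t) : phiR ℓ (-t) = Rf ℓ t / t ^ ℓ := by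
  have h := phiR_key ℓ (-t)
  have : Rf ℓ t = t ^ ℓ * phiR ℓ (-t) := by
    unfold Rf
    rw [← h, neg_pow]
    ring_nf
    rw [pow_mul, ← pow_mul, mul_comm ℓ 2, pow_mul, neg_one_sq, one_pow, mul_one]
  rw [this]
  field_simp

lemma phiR_pos (ℓ : ℕ) (t : ℝ) (ht : 0 < t) : 0 < phiR ℓ (-t) := by
  rw [phiR_Rf ℓ t ht]
  exact div_pos (Rf_pos ℓ t ht) (pow_pos ht ℓ)

/-- For every integer `ℓ ≥ 1` and every real `z ≤ 0`, `|1 − φ_ℓ(2z)/φ_ℓ(z)| < 1/2`. -/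
theorem stmt13 (ℓ : ℕ) (hℓ : 1 ≤ ℓ) (z : ℝ) (hz : z ≤ 0) :
    |1 - phiR ℓ (2 * z) / phiR ℓ z| < 1 / 2 := by
  rcases lt_or_eq_of_le hz with hlt | rfl
  · set t := -z with hht
    have ht : 0 < t := by rw [hht]; linarith
    have h2z : (2:ℝ) * z = -(2*t) := by rw [hht]; ring
    have hzz : z = -t := by rw [hht]; ring
    have e1 : phiR ℓ z = Rf ℓ t / t ^ ℓ := by rw [hzz]; exact phiR_Rf ℓ t ht
    have e2 : phiR ℓ (2*z) = Rf ℓ (2*t) / (2*t) ^ ℓ := by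
      rw [h2z]; exact phiR_Rf ℓ (2*t) (by linarith)
    have hB : 0 < Rf ℓ t := Rf_pos ℓ t ht
    have hA : 0 < Rf ℓ (2*t) := Rf_pos ℓ (2*t) (by linarith)
    have hr : phiR ℓ (2*z) / phiR ℓ z = Rf ℓ (2*t) / (2^ℓ * Rf ℓ t) := by
      rw [e1, e2, mul_pow]
      have h1 : t ^ ℓ ≠ 0 := ne_of_gt (pow_pos ht ℓ)
      field_simp
    obtain ⟨m, rfl⟩ : ∃ m, ℓ = m + 1 := ⟨ℓ - 1, (Nat.succ_pred_eq_of_pos hℓ).symm⟩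
    have hub : Rf (m+1) (2*t) / (2^(m+1) * Rf (m+1) t) ≤ 1 := by
      rw [div_le_one (by positivity)]
      exact RC (m+1) t ht.le
    have hlb : 1/2 < Rf (m+1) (2*t) / (2^(m+1) * Rf (m+1) t) := by
      rw [lt_div_iff₀ (by positivity), pow_succ]
      nlinarith [RD m t ht]
    rw [hr, abs_of_nonneg (by linarith)]
    linarith
  · have hphi0 : phiR ℓ 0 = 1 / (ℓ.factorial : ℝ) := by
      unfold phiR
      rw [tsum_eq_single 0 (fun k hk => by simp [zero_pow hk])]
      norm_num
    have hne : (1 : ℝ) / (ℓ.factorial : ℝ) ≠ 0 := by positivity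
    rw [mul_zero, hphi0, div_self hne]
    norm_num
end

section
/- For every complex number z = x + iy with x < 0, one has φ_1(z) ≠ 0 and |1 − φ_1(2z)/φ_1(z)| < 1. -/
lemma phiC_one_mul (z : ℂ) : z * phiC 1 z = Complex.exp z - 1 := by
  have hs : Summable (fun n : ℕ => z ^ n / (n.factorial : ℂ)) :=
    NormedSpace.expSeries_div_summable z
  have hexp : Complex.exp z = ∑' n : ℕ, z ^ n / (n.factorial : ℂ) := by
    rw [Complex.exp_eq_exp_ℂ, NormedSpace.exp_eq_tsum_div]
  have h0 : ∑' n : ℕ, z ^ n / (n.factorial : ℂ)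
      = 1 + ∑' n : ℕ, z ^ (n + 1) / ((n + 1).factorial : ℂ) := by
    rw [hs.tsum_eq_zero_add]; simp
  have hmul : z * phiC 1 z = ∑' n : ℕ, z ^ (n + 1) / ((n + 1).factorial : ℂ) := by
    rw [phiC, ← tsum_mul_left]
    congr 1; funext k
    rw [Nat.add_comm 1 k]; ring
  rw [hmul, hexp, h0]; ring

/-- For every complex `z = x + iy` with `x < 0`, one has `φ_1(z) ≠ 0` and
`|1 − φ_1(2z)/φ_1(z)| < 1`. -/
theorem stmt14 (z : ℂ) (hz : z.re < 0) :
    phiC 1 z ≠ 0 ∧ ‖1 - phiC 1 (2 * z) / phiC 1 z‖ < 1 := by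
  have hz0 : z ≠ 0 := fun h => by simp [h] at hz
  have hE : ‖Complex.exp z‖ < 1 := by
    rw [Complex.norm_exp]; exact Real.exp_lt_one_iff.mpr hz
  have he1 : Complex.exp z ≠ 1 := by
    intro h; rw [h] at hE; simp at hE
  have hen : Complex.exp z - 1 ≠ 0 := sub_ne_zero.mpr he1
  have h1 : phiC 1 z = (Complex.exp z - 1) / z := by
    field_simp [eq_div_iff hz0]
    linear_combination phiC_one_mul z
  have hne : phiC 1 z ≠ 0 := by
    rw [h1]; exact div_ne_zero hen hz0
  refine ⟨hne, ?_⟩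
  have h2z0 : (2 : ℂ) * z ≠ 0 := mul_ne_zero two_ne_zero hz0
  have h2 : phiC 1 (2 * z) = (Complex.exp (2 * z) - 1) / (2 * z) := by
    field_simp [eq_div_iff h2z0]
    linear_combination phiC_one_mul (2 * z)
  have hexp2 : Complex.exp (2 * z) = Complex.exp z * Complex.exp z := by
    rw [two_mul, Complex.exp_add]
  have key : 1 - phiC 1 (2 * z) / phiC 1 z = (1 - Complex.exp z) / 2 := by
    rw [h1, h2, hexp2]
    field_simp
    ring
  rw [key, norm_div, Complex.norm_two]
  have hle : ‖1 - Complex.exp z‖ ≤ 1 + ‖Complex.exp z‖ := by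
    have := norm_sub_le (1 : ℂ) (Complex.exp z)
    simpa using this
  linarith
end

section
/- Let n ≥ 1, let M and X_0 be n×n complex matrices, and define the Newton–Schulz sequence X_{k+1} := 2X_k − X_k M X_k for k ≥ 0. If every eigenvalue of I − X_0 M has modulus strictly less than 1 (equivalently, the spectral radius of I − X_0 M is < 1), then M is invertible and the sequence (X_k) converges to M^{−1} (in any norm on the space of n×n complex matrices). -/
open Filter
set_option maxHeartbeats 1000000

-- auxiliary: powers tend to zero when spectral radius < 1, in a complex Banach algebra
theorem aux_pow_tendsto {A : Type*} [NormedRing A] [NormedAlgebra ℂ A] [CompleteSpace A]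
    [NormOneClass A] (a : A) (h : spectralRadius ℂ a < 1) :
    Tendsto (fun m : ℕ => a ^ m) atTop (nhds 0) := by
  obtain ⟨r, hr1, hr2⟩ := exists_between h
  have hrtop : r ≠ ⊤ := (hr2.trans_le le_top).ne
  have hgel := spectrum.pow_nnnorm_pow_one_div_tendsto_nhds_spectralRadius a
  have hev : ∀ᶠ m : ℕ in atTop, (‖a ^ m‖₊ : ENNReal) ^ (1 / (m : ℝ)) < r :=
    hgel.eventually_lt_const hr1
  set c : NNReal := r.toNNReal with hc
  have hc1 : (c : ℝ) < 1 := by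
    have := ENNReal.toNNReal_strict_mono (by norm_num) hr2
    simpa [hc] using this
  have hbound : ∀ᶠ m : ℕ in atTop, ‖a ^ m‖ ≤ (c : ℝ) ^ m := by
    filter_upwards [hev, eventually_ge_atTop 1] with m hm hm1
    have hmpos : (0 : ℝ) < m := by exact_mod_cast hm1
    have h3 : (‖a ^ m‖₊ : ENNReal) ≤ r ^ (m : ℝ) := by
      have := ENNReal.rpow_le_rpow hm.le hmpos.le
      rwa [← ENNReal.rpow_mul, one_div, inv_mul_cancel₀ hmpos.ne', ENNReal.rpow_one] at this
    rw [ENNReal.rpow_natCast, ← ENNReal.coe_toNNReal hrtop, ← hc, ← ENNReal.coe_pow,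
      ENNReal.coe_le_coe] at h3
    calc ‖a ^ m‖ = ((‖a ^ m‖₊ : NNReal) : ℝ) := rfl
      _ ≤ ((c ^ m : NNReal) : ℝ) := by exact_mod_cast h3
      _ = (c : ℝ) ^ m := by push_cast; ring
  exact squeeze_zero_norm' hbound
    (tendsto_pow_atTop_nhds_zero_of_lt_one c.coe_nonneg hc1)

/-- Let `n ≥ 1`, let `M, X₀` be `n×n` complex matrices, and define the Newton–Schulz
sequence `X_{k+1} := 2X_k − X_k M X_k`. If every eigenvalue of `I − X₀M` has modulus
strictly less than `1`, then `M` is invertible and `X_k → M⁻¹`. -/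
theorem stmt18 (n : ℕ) (hn : 1 ≤ n) (M X₀ : Matrix (Fin n) (Fin n) ℂ)
    (X : ℕ → Matrix (Fin n) (Fin n) ℂ) (hX0 : X 0 = X₀)
    (hrec : ∀ k : ℕ, X (k + 1) = 2 • X k - X k * M * X k)
    (hspec : ∀ μ ∈ spectrum ℂ ((1 : Matrix (Fin n) (Fin n) ℂ) - X₀ * M), ‖μ‖ < 1) :
    IsUnit M ∧ Tendsto X atTop (nhds M⁻¹) := by
  haveI : NeZero n := ⟨by omega⟩
  set E : Matrix (Fin n) (Fin n) ℂ := 1 - X₀ * M with hE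
  -- M is a unit
  have h1 : (1 : ℂ) ∉ spectrum ℂ E := fun h => absurd (hspec 1 h) (by norm_num)
  have hXM : IsUnit (X₀ * M) := by
    rw [spectrum.mem_iff, not_not] at h1
    simpa [hE, sub_sub_cancel] using h1
  have hMdet : IsUnit M.det := by
    have := (Matrix.isUnit_iff_isUnit_det _).mp hXM
    rw [Matrix.det_mul] at this
    exact isUnit_of_mul_isUnit_right this
  have hM : IsUnit M := (Matrix.isUnit_iff_isUnit_det _).mpr hMdet
  refine ⟨hM, ?_⟩
  -- key identity
  have hkey : ∀ k : ℕ, 1 - X k * M = E ^ (2 ^ k) := by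
    intro k
    induction k with
    | zero => simp [hX0, hE]
    | succ k ih =>
      have hB : ∀ B : Matrix (Fin n) (Fin n) ℂ, 1 - (B + B - B * B) = (1 - B) * (1 - B) := by
        intro B; noncomm_ring
      have : 1 - X (k + 1) * M = (1 - X k * M) * (1 - X k * M) := by
        rw [hrec k]
        have h2 : (2 • X k - X k * M * X k) * M
            = X k * M + X k * M - (X k * M) * (X k * M) := by
          simp only [Matrix.sub_mul, two_smul, Matrix.add_mul, Matrix.mul_assoc]
        rw [h2, hB]
      rw [this, ih, ← pow_two, ← pow_mul, pow_succ]
  -- transfer to CLM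
  set φ := Matrix.toEuclideanCLM (n := Fin n) (𝕜 := ℂ)
  set a := φ E with ha
  have hspeca : spectrum ℂ a = spectrum ℂ E := AlgEquiv.spectrum_eq φ E
  have hρ : spectralRadius ℂ a < 1 := by
    have := spectrum.spectralRadius_lt_of_forall_lt (a := a) (r := 1) ?_
    · simpa using this
    · intro z hz
      rw [hspeca] at hz
      have := hspec z hz
      simpa [← coe_nnnorm] using this
  have hpow : Tendsto (fun m : ℕ => a ^ m) atTop (nhds 0) := aux_pow_tendsto a hρ
  have hEpow : Tendsto (fun m : ℕ => E ^ m) atTop (nhds 0) := by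
    set ψ := (AlgEquivClass.toAlgEquiv φ).symm with hψ
    have hφsymm : Continuous ψ :=
      LinearMap.continuous_of_finiteDimensional ψ.toLinearEquiv.toLinearMap
    have h2 := (hφsymm.tendsto 0).comp hpow
    have heq : ∀ m : ℕ, ψ (a ^ m) = E ^ m := by
      intro m
      rw [map_pow, ha, hψ]
      congr 1
      exact (AlgEquivClass.toAlgEquiv φ).symm_apply_apply E
    rw [show (0 : Matrix (Fin n) (Fin n) ℂ) = ψ 0 by rw [map_zero]]
    refine Tendsto.congr (fun m => heq m) h2
  have hE2 : Tendsto (fun k : ℕ => E ^ (2 ^ k)) atTop (nhds 0) :=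
    hEpow.comp (tendsto_pow_atTop_atTop_of_one_lt one_lt_two)
  have hXM2 : Tendsto (fun k => X k * M) atTop (nhds 1) := by
    have : (fun k => X k * M) = fun k => 1 - E ^ (2 ^ k) := by
      funext k; rw [← hkey k, sub_sub_cancel]
    rw [this]
    simpa using tendsto_const_nhds.sub hE2
  have hXeq : X = fun k => (X k * M) * M⁻¹ := by
    funext k
    rw [mul_assoc, Matrix.mul_nonsing_inv M hMdet, mul_one]
  rw [hXeq]
  have := hXM2.mul (tendsto_const_nhds (x := M⁻¹))
  simpa using this
end
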